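/- Let d ≥ 2, let f : ℝ^{d−1} → ℝ be measurable, and let Σ = { (x̄, x_d) ∈ ℝ^{d−1} × ℝ : x_d ≤ f(x̄) }. Then for every t > 0 and every (x̄, x_d) ∈ ℝ^{d−1} × ℝ, (G_t * 1_Σ)(x̄, x_d) = 1/2 + (1/2) ∫_{ℝ^{d−1}} G_t^{(d−1)}(x̄ − ȳ) · erf( (f(ȳ) − x_d) / (2√t) ) dȳ, where G_t^{(d−1)} denotes the Gaussian kernel on ℝ^{d−1}. -/

import Mathlib

open MeasureTheory

/-- The Gaussian kernel on `ℝ^n` at time `t`. -/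
noncomputable def gaussKer (n : ℕ) (t : ℝ) (x : EuclideanSpace ℝ (Fin n)) : ℝ :=
  (4 * Real.pi * t) ^ (-(n : ℝ) / 2) * Real.exp (-‖x‖ ^ 2 / (4 * t))

/-- The Gaussian kernel at time `t` on `ℝ^d = ℝ^{d−1} × ℝ`, written in split coordinates
`(x̄, x_d)`; here `n = d − 1` so the dimension is `n + 1`. -/
noncomputable def gaussKerSplit (n : ℕ) (t : ℝ) (p : EuclideanSpace ℝ (Fin n) × ℝ) : ℝ :=
  (4 * Real.pi * t) ^ (-((n : ℝ) + 1) / 2) * Real.exp (-(‖p.1‖ ^ 2 + p.2 ^ 2) / (4 * t))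

/-- Convolution of the Gaussian kernel on `ℝ^{d−1} × ℝ` with a function. -/
noncomputable def gaussConvSplit (n : ℕ) (t : ℝ) (u : EuclideanSpace ℝ (Fin n) × ℝ → ℝ)
    (p : EuclideanSpace ℝ (Fin n) × ℝ) : ℝ :=
  ∫ q : EuclideanSpace ℝ (Fin n) × ℝ, gaussKerSplit n t (p.1 - q.1, p.2 - q.2) * u q

/-- The error function `erf(s) = (2/√π) ∫₀ˢ exp(−r²) dr`. -/
noncomputable def erf (s : ℝ) : ℝ :=
  (2 / Real.sqrt Real.pi) * ∫ r in (0 : ℝ)..s, Real.exp (-r ^ 2)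


open Real Set Filter

lemma integrable_gauss1d {t : ℝ} (ht : 0 < t) :
    Integrable (fun s : ℝ => Real.exp (-s ^ 2 / (4 * t))) := by
  have h := integrable_exp_neg_mul_sq (show (0:ℝ) < 1 / (4 * t) by positivity)
  refine h.congr (Filter.Eventually.of_forall fun s => ?_)
  ring_nf

lemma gauss_Ioi_exp (c : ℝ) :
    ∫ u in Ioi c, Real.exp (-u ^ 2) =
      Real.sqrt Real.pi / 2 - ∫ r in (0:ℝ)..c, Real.exp (-r ^ 2) := by
  have hint : Integrable (fun s : ℝ => Real.exp (-s ^ 2)) := by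
    have h := integrable_exp_neg_mul_sq (show (0:ℝ) < 1 by norm_num)
    refine h.congr (Filter.Eventually.of_forall fun s => ?_); ring_nf
  have htot : ∫ u : ℝ, Real.exp (-u ^ 2) = Real.sqrt Real.pi := by
    have := integral_gaussian (1:ℝ)
    simpa using this
  have hIoi0 : ∫ u in Ioi (0:ℝ), Real.exp (-u ^ 2) = Real.sqrt Real.pi / 2 := by
    have := integral_gaussian_Ioi (1:ℝ)
    simpa using this
  have h1 : (∫ u in Iic c, Real.exp (-u^2)) - ∫ u in Iic (0:ℝ), Real.exp (-u^2)
      = ∫ r in (0:ℝ)..c, Real.exp (-r^2) :=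
    intervalIntegral.integral_Iic_sub_Iic hint.integrableOn hint.integrableOn
  have h2 : (∫ u in Iic c, Real.exp (-u^2)) + ∫ u in Ioi c, Real.exp (-u^2)
      = Real.sqrt Real.pi := by
    rw [intervalIntegral.integral_Iic_add_Ioi hint.integrableOn hint.integrableOn, htot]
  have h3 : (∫ u in Iic (0:ℝ), Real.exp (-u^2)) + ∫ u in Ioi (0:ℝ), Real.exp (-u^2)
      = Real.sqrt Real.pi := by
    rw [intervalIntegral.integral_Iic_add_Ioi hint.integrableOn hint.integrableOn, htot]
  rw [hIoi0] at h3
  linarith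

lemma erf_neg (s : ℝ) : erf (-s) = - erf s := by
  unfold erf
  have h : ∫ r in (0:ℝ)..(-s), Real.exp (-r ^ 2)
      = - ∫ r in (0:ℝ)..s, Real.exp (-r ^ 2) := by
    have := intervalIntegral.integral_comp_neg (a := s) (b := 0)
      (f := fun r : ℝ => Real.exp (-r ^ 2))
    simp only [neg_zero, neg_neg, even_two, Even.neg_pow] at this
    rw [← this, intervalIntegral.integral_symm]
  rw [h]; ring

lemma gauss_Ioi {t : ℝ} (ht : 0 < t) (a : ℝ) :
    ∫ u in Ioi a, Real.exp (-u ^ 2 / (4 * t))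
      = 2 * Real.sqrt t * (Real.sqrt Real.pi / 2
          - ∫ r in (0:ℝ)..(a / (2 * Real.sqrt t)), Real.exp (-r ^ 2)) := by
  have hst : 0 < Real.sqrt t := Real.sqrt_pos.mpr ht
  have hb : (0:ℝ) < (2 * Real.sqrt t)⁻¹ := by positivity
  have key : ∀ u : ℝ, Real.exp (-u ^ 2 / (4 * t))
      = (fun r : ℝ => Real.exp (-r ^ 2)) (u * (2 * Real.sqrt t)⁻¹) := by
    intro u
    simp only
    congr 1
    rw [mul_pow, inv_pow]
    have : (2 * Real.sqrt t) ^ 2 = 4 * t := by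
      rw [mul_pow, Real.sq_sqrt ht.le]; norm_num
    rw [this]; ring
  calc ∫ u in Ioi a, Real.exp (-u ^ 2 / (4 * t))
      = ∫ u in Ioi a, (fun r : ℝ => Real.exp (-r ^ 2)) (u * (2 * Real.sqrt t)⁻¹) := by
        exact setIntegral_congr_fun measurableSet_Ioi fun u _ => key u
    _ = ((2 * Real.sqrt t)⁻¹)⁻¹ • ∫ r in Ioi (a * (2 * Real.sqrt t)⁻¹), Real.exp (-r ^ 2) :=
        integral_comp_mul_right_Ioi (fun r => Real.exp (-r ^ 2)) a hb
    _ = 2 * Real.sqrt t * (Real.sqrt Real.pi / 2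
          - ∫ r in (0:ℝ)..(a / (2 * Real.sqrt t)), Real.exp (-r ^ 2)) := by
        rw [inv_inv, smul_eq_mul, gauss_Ioi_exp, show a / (2*Real.sqrt t) = a * (2*Real.sqrt t)⁻¹ from div_eq_mul_inv _ _]

lemma gauss1d_Iic {t : ℝ} (ht : 0 < t) (x c : ℝ) :
    ∫ s in Iic c, (4 * Real.pi * t) ^ (-(1:ℝ)/2) * Real.exp (-(x - s) ^ 2 / (4 * t))
      = 1 / 2 + 1 / 2 * erf ((c - x) / (2 * Real.sqrt t)) := by
  have hst : 0 < Real.sqrt t := Real.sqrt_pos.mpr ht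
  have hsub : ∫ s in Iic c, Real.exp (-(x - s) ^ 2 / (4 * t))
      = ∫ u in Ioi (x - c), Real.exp (-u ^ 2 / (4 * t)) := by
    have hmp : MeasurePreserving (fun s : ℝ => x - s) volume volume :=
      Measure.measurePreserving_sub_left volume x
    have hemb : MeasurableEmbedding (fun s : ℝ => x - s) :=
      (Homeomorph.subLeft x).isClosedEmbedding.measurableEmbedding
    have hpre : (fun s : ℝ => x - s) ⁻¹' (Ici (x - c)) = Iic c := by
      ext s; simp only [mem_preimage, mem_Ici, mem_Iic]; constructor <;> intro h <;> linarith
    have := hmp.setIntegral_preimage_emb hemb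
      (fun u => Real.exp (-u ^ 2 / (4 * t))) (Ici (x - c))
    rw [hpre] at this
    rw [this, integral_Ici_eq_integral_Ioi]
  rw [MeasureTheory.integral_const_mul, hsub, gauss_Ioi ht]
  have hC : (4 * Real.pi * t) ^ (-(1:ℝ)/2) * (2 * Real.sqrt t) = 1 / Real.sqrt Real.pi := by
    have h4 : (0:ℝ) < 4 * Real.pi * t := by positivity
    rw [show (-(1:ℝ)/2) = -(1/2) by norm_num, Real.rpow_neg h4.le, ← Real.sqrt_eq_rpow]
    rw [show (4:ℝ) * Real.pi * t = (2 * Real.sqrt Real.pi * Real.sqrt t)^2 by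
      rw [mul_pow, mul_pow, Real.sq_sqrt Real.pi_pos.le, Real.sq_sqrt ht.le]; ring]
    rw [Real.sqrt_sq (by positivity)]
    field_simp
  have herf : erf ((c - x) / (2 * Real.sqrt t)) = - erf ((x - c) / (2 * Real.sqrt t)) := by
    rw [show (c - x) / (2 * Real.sqrt t) = -((x - c) / (2 * Real.sqrt t)) by ring, erf_neg]
  rw [herf]
  unfold erf
  rw [← mul_assoc, hC]
  have hp : Real.sqrt Real.pi > 0 := Real.sqrt_pos.mpr Real.pi_pos
  field_simp
  ring

lemma erf_continuous : Continuous erf := by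
  unfold erf
  exact continuous_const.mul (intervalIntegral.continuous_primitive
    (fun a b => (Continuous.intervalIntegrable (by continuity) a b)) 0)

lemma abs_erf_le (s : ℝ) : |erf s| ≤ 2 := by
  have hint : Integrable (fun r : ℝ => Real.exp (-r ^ 2)) := by
    have h := integrable_exp_neg_mul_sq (show (0:ℝ) < 1 by norm_num)
    refine h.congr (Filter.Eventually.of_forall fun s => ?_); ring_nf
  have htot : ∫ u : ℝ, Real.exp (-u ^ 2) = Real.sqrt Real.pi := by
    simpa using integral_gaussian (1:ℝ)
  have hp : (0:ℝ) < Real.sqrt Real.pi := Real.sqrt_pos.mpr Real.pi_pos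
  have hb : |∫ r in (0:ℝ)..s, Real.exp (-r ^ 2)| ≤ Real.sqrt Real.pi := by
    have hIoc : ∀ a b : ℝ, (∫ r in Ioc a b, Real.exp (-r ^ 2)) ≤ Real.sqrt Real.pi := by
      intro a b
      rw [← htot]
      exact setIntegral_le_integral hint
        (Filter.Eventually.of_forall fun r => (Real.exp_pos _).le)
    have hnn : ∀ a b : ℝ, (0:ℝ) ≤ ∫ r in Ioc a b, Real.exp (-r ^ 2) :=
      fun a b => setIntegral_nonneg measurableSet_Ioc fun r _ => (Real.exp_pos _).le
    rcases le_total 0 s with h | h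
    · rw [intervalIntegral.integral_of_le h, abs_of_nonneg (hnn 0 s)]
      exact hIoc 0 s
    · rw [intervalIntegral.integral_of_ge h, abs_neg, abs_of_nonneg (hnn s 0)]
      exact hIoc s 0
  unfold erf
  rw [abs_mul, abs_of_nonneg (by positivity : (0:ℝ) ≤ 2 / Real.sqrt Real.pi)]
  calc 2 / Real.sqrt Real.pi * |∫ r in (0:ℝ)..s, Real.exp (-r ^ 2)|
      ≤ 2 / Real.sqrt Real.pi * Real.sqrt Real.pi := by
        exact mul_le_mul_of_nonneg_left hb (by positivity)
    _ = 2 := by field_simp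

lemma integrable_gaussE {n : ℕ} {b : ℝ} (hb : 0 < b) :
    Integrable (fun v : EuclideanSpace ℝ (Fin n) => Real.exp (-b * ‖v‖ ^ 2)) := by
  have h := (GaussianFourier.integrable_cexp_neg_mul_sq_norm_add
    (V := EuclideanSpace ℝ (Fin n)) (b := (b:ℂ)) (by simpa using hb) 0 0).norm
  refine h.congr (Filter.Eventually.of_forall fun v => ?_)
  simp only
  rw [Complex.norm_exp]
  norm_num [← Complex.ofReal_pow]

lemma integral_gaussE {n : ℕ} {t : ℝ} (ht : 0 < t) :
    ∫ v : EuclideanSpace ℝ (Fin n), Real.exp (-‖v‖ ^ 2 / (4 * t))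
      = (4 * Real.pi * t) ^ ((n : ℝ) / 2) := by
  have hb : (0:ℝ) < 1 / (4 * t) := by positivity
  have h := GaussianFourier.integral_rexp_neg_mul_sq_norm
    (V := EuclideanSpace ℝ (Fin n)) hb
  rw [finrank_euclideanSpace_fin] at h
  have h2 : ∀ v : EuclideanSpace ℝ (Fin n),
      Real.exp (-(1 / (4 * t)) * ‖v‖ ^ 2) = Real.exp (-‖v‖ ^ 2 / (4 * t)) := by
    intro v; ring_nf
  calc ∫ v : EuclideanSpace ℝ (Fin n), Real.exp (-‖v‖ ^ 2 / (4 * t))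
      = ∫ v : EuclideanSpace ℝ (Fin n), Real.exp (-(1 / (4 * t)) * ‖v‖ ^ 2) :=
        integral_congr_ae (Filter.Eventually.of_forall fun v => (h2 v).symm)
    _ = (Real.pi / (1 / (4 * t))) ^ ((n : ℝ) / 2) := h
    _ = (4 * Real.pi * t) ^ ((n : ℝ) / 2) := by
        congr 1
        field_simp

/-- Gaussian convolution of the indicator of a subgraph `Σ = {x_d ≤ f(x̄)}` in
`ℝ^d = ℝ^{d−1} × ℝ` (with `n = d − 1 ≥ 1`):
`(G_t * 1_Σ)(x̄, x_d) = 1/2 + (1/2) ∫ G_t^{(d−1)}(x̄ − ȳ) erf((f(ȳ) − x_d)/(2√t)) dȳ`. -/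
theorem gauss_conv_subgraph (n : ℕ) (hn : 1 ≤ n)
    (f : EuclideanSpace ℝ (Fin n) → ℝ) (hf : Measurable f)
    (S : Set (EuclideanSpace ℝ (Fin n) × ℝ))
    (hS : S = {p : EuclideanSpace ℝ (Fin n) × ℝ | p.2 ≤ f p.1}) :
    ∀ t : ℝ, 0 < t → ∀ p : EuclideanSpace ℝ (Fin n) × ℝ,
      gaussConvSplit n t (Set.indicator S 1) p =
        1 / 2 + (1 / 2) * ∫ y : EuclideanSpace ℝ (Fin n),
          gaussKer n t (p.1 - y) * erf ((f y - p.2) / (2 * Real.sqrt t)) := by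
  intro t ht p
  have h4 : (0:ℝ) < 4 * Real.pi * t := by positivity
  have hst : 0 < Real.sqrt t := Real.sqrt_pos.mpr ht
  -- factorization of the split kernel
  have hker : ∀ (y : EuclideanSpace ℝ (Fin n)) (s : ℝ),
      gaussKerSplit n t (p.1 - y, p.2 - s)
        = gaussKer n t (p.1 - y)
            * ((4 * Real.pi * t) ^ (-(1:ℝ)/2) * Real.exp (-(p.2 - s) ^ 2 / (4 * t))) := by
    intro y s
    unfold gaussKerSplit gaussKer
    rw [show (-((n:ℝ) + 1) / 2) = (-(n:ℝ)/2) + (-(1:ℝ)/2) by ring, Real.rpow_add h4,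
      show (-(‖p.1 - y‖ ^ 2 + (p.2 - s) ^ 2) / (4 * t))
        = (-‖p.1 - y‖ ^ 2 / (4 * t)) + (-(p.2 - s) ^ 2 / (4 * t)) by ring, Real.exp_add]
    ring
  -- integrability pieces
  have he1 : Integrable (fun y : EuclideanSpace ℝ (Fin n) =>
      Real.exp (-‖p.1 - y‖ ^ 2 / (4 * t))) := by
    have h0 : Integrable (fun v : EuclideanSpace ℝ (Fin n) =>
        Real.exp (-(1/(4*t)) * ‖v‖ ^ 2)) := integrable_gaussE (by positivity)
    have hmp : MeasurePreserving (fun y : EuclideanSpace ℝ (Fin n) => p.1 - y) volume volume :=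
      Measure.measurePreserving_sub_left volume p.1
    have hemb : MeasurableEmbedding (fun y : EuclideanSpace ℝ (Fin n) => p.1 - y) :=
      (Homeomorph.subLeft p.1).isClosedEmbedding.measurableEmbedding
    have h1 := (hmp.integrable_comp_emb hemb).mpr h0
    refine h1.congr (Filter.Eventually.of_forall fun y => ?_)
    simp only [Function.comp_apply]
    ring_nf
  have he2 : Integrable (fun s : ℝ => Real.exp (-(p.2 - s) ^ 2 / (4 * t))) := by
    have h0 := integrable_gauss1d ht
    have hmp : MeasurePreserving (fun s : ℝ => p.2 - s) volume volume :=
      Measure.measurePreserving_sub_left volume p.2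
    have hemb : MeasurableEmbedding (fun s : ℝ => p.2 - s) :=
      (Homeomorph.subLeft p.2).isClosedEmbedding.measurableEmbedding
    have h1 := (hmp.integrable_comp_emb hemb).mpr h0
    exact h1.congr (Filter.Eventually.of_forall fun s => rfl)
  have hKint : Integrable (fun q : EuclideanSpace ℝ (Fin n) × ℝ =>
      gaussKerSplit n t (p.1 - q.1, p.2 - q.2)) := by
    rw [Measure.volume_eq_prod]
    have hprod := he1.mul_prod he2
    refine ((hprod.const_mul ((4 * Real.pi * t) ^ (-((n:ℝ) + 1) / 2))).congr
      (Filter.Eventually.of_forall fun q => ?_))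
    unfold gaussKerSplit
    simp only
    rw [show (-(‖p.1 - q.1‖ ^ 2 + (p.2 - q.2) ^ 2) / (4 * t))
      = (-‖p.1 - q.1‖ ^ 2 / (4 * t)) + (-(p.2 - q.2) ^ 2 / (4 * t)) by ring, Real.exp_add]
  have hSm : MeasurableSet S := by
    rw [hS]; exact measurableSet_le measurable_snd (hf.comp measurable_fst)
  have hFeq : (fun q : EuclideanSpace ℝ (Fin n) × ℝ =>
      gaussKerSplit n t (p.1 - q.1, p.2 - q.2) * Set.indicator S 1 q)
      = S.indicator (fun q => gaussKerSplit n t (p.1 - q.1, p.2 - q.2)) := by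
    funext q
    by_cases hq : q ∈ S <;> simp [hq]
  have hF : Integrable (fun q : EuclideanSpace ℝ (Fin n) × ℝ =>
      gaussKerSplit n t (p.1 - q.1, p.2 - q.2) * Set.indicator S 1 q) := by
    rw [hFeq]; exact hKint.indicator hSm
  -- Fubini
  have hsplit : gaussConvSplit n t (Set.indicator S 1) p
      = ∫ y : EuclideanSpace ℝ (Fin n), ∫ s : ℝ,
          gaussKerSplit n t (p.1 - y, p.2 - s) * Set.indicator S 1 (y, s) := by
    unfold gaussConvSplit
    rw [Measure.volume_eq_prod] at hF ⊢
    exact integral_prod _ hF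
  -- inner integral
  have hinner : ∀ y : EuclideanSpace ℝ (Fin n),
      (∫ s : ℝ, gaussKerSplit n t (p.1 - y, p.2 - s) * Set.indicator S 1 (y, s))
        = gaussKer n t (p.1 - y)
            * (1 / 2 + 1 / 2 * erf ((f y - p.2) / (2 * Real.sqrt t))) := by
    intro y
    have hind : ∀ s : ℝ, Set.indicator S (1 : EuclideanSpace ℝ (Fin n) × ℝ → ℝ) (y, s)
        = Set.indicator (Iic (f y)) (1 : ℝ → ℝ) s := by
      intro s
      rw [hS]
      by_cases h : s ≤ f y <;> simp [Set.indicator, h]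
    calc (∫ s : ℝ, gaussKerSplit n t (p.1 - y, p.2 - s) * Set.indicator S 1 (y, s))
        = ∫ s : ℝ, gaussKer n t (p.1 - y) * (Set.indicator (Iic (f y))
            (fun s => (4 * Real.pi * t) ^ (-(1:ℝ)/2)
              * Real.exp (-(p.2 - s) ^ 2 / (4 * t))) s) := by
          refine integral_congr_ae (Filter.Eventually.of_forall fun s => ?_)
          simp only
          rw [hker y s, hind s]
          by_cases h : s ∈ Iic (f y) <;> simp [h] <;> ring
      _ = gaussKer n t (p.1 - y) * ∫ s : ℝ, Set.indicator (Iic (f y))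
            (fun s => (4 * Real.pi * t) ^ (-(1:ℝ)/2)
              * Real.exp (-(p.2 - s) ^ 2 / (4 * t))) s := integral_const_mul _ _
      _ = gaussKer n t (p.1 - y) * ∫ s in Iic (f y),
            (4 * Real.pi * t) ^ (-(1:ℝ)/2) * Real.exp (-(p.2 - s) ^ 2 / (4 * t)) := by
          rw [integral_indicator measurableSet_Iic]
      _ = gaussKer n t (p.1 - y)
            * (1 / 2 + 1 / 2 * erf ((f y - p.2) / (2 * Real.sqrt t))) := by
          rw [gauss1d_Iic ht p.2 (f y)]
  rw [hsplit, integral_congr_ae (Filter.Eventually.of_forall hinner)]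
  -- outer integral
  have hK1 : Integrable (fun y : EuclideanSpace ℝ (Fin n) => gaussKer n t (p.1 - y)) := by
    have := he1.const_mul ((4 * Real.pi * t) ^ (-(n:ℝ)/2))
    exact this.congr (Filter.Eventually.of_forall fun y => rfl)
  have hK1nn : ∀ y, 0 ≤ gaussKer n t (p.1 - y) := by
    intro y; unfold gaussKer; positivity
  have herfm : AEStronglyMeasurable (fun y : EuclideanSpace ℝ (Fin n) =>
      gaussKer n t (p.1 - y) * erf ((f y - p.2) / (2 * Real.sqrt t))) volume := by
    refine hK1.aestronglyMeasurable.mul ?_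
    exact (erf_continuous.measurable.comp
      ((hf.sub measurable_const).div_const _)).aestronglyMeasurable
  have herfint : Integrable (fun y : EuclideanSpace ℝ (Fin n) =>
      gaussKer n t (p.1 - y) * erf ((f y - p.2) / (2 * Real.sqrt t))) := by
    refine Integrable.mono' (hK1.const_mul 2) herfm
      (Filter.Eventually.of_forall fun y => ?_)
    rw [Real.norm_eq_abs, abs_mul, abs_of_nonneg (hK1nn y)]
    calc gaussKer n t (p.1 - y) * |erf ((f y - p.2) / (2 * Real.sqrt t))|
        ≤ gaussKer n t (p.1 - y) * 2 := mul_le_mul_of_nonneg_left (abs_erf_le _) (hK1nn y)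
      _ = 2 * gaussKer n t (p.1 - y) := by ring
  have hintK1 : ∫ y : EuclideanSpace ℝ (Fin n), gaussKer n t (p.1 - y) = 1 := by
    rw [integral_sub_left_eq_self (fun y => gaussKer n t y) volume p.1]
    unfold gaussKer
    rw [integral_const_mul, integral_gaussE ht, ← Real.rpow_add h4,
      show -(n:ℝ)/2 + (n:ℝ)/2 = 0 by ring, Real.rpow_zero]
  calc ∫ y : EuclideanSpace ℝ (Fin n), gaussKer n t (p.1 - y)
        * (1 / 2 + 1 / 2 * erf ((f y - p.2) / (2 * Real.sqrt t)))
      = ∫ y : EuclideanSpace ℝ (Fin n), ((1:ℝ)/2 * gaussKer n t (p.1 - y)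
          + 1/2 * (gaussKer n t (p.1 - y) * erf ((f y - p.2) / (2 * Real.sqrt t)))) := by
        refine integral_congr_ae (Filter.Eventually.of_forall fun y => ?_)
        ring
    _ = 1/2 * (∫ y : EuclideanSpace ℝ (Fin n), gaussKer n t (p.1 - y))
          + 1/2 * ∫ y : EuclideanSpace ℝ (Fin n),
            gaussKer n t (p.1 - y) * erf ((f y - p.2) / (2 * Real.sqrt t)) := by
        rw [integral_add (hK1.const_mul _) (herfint.const_mul _),
          integral_const_mul, integral_const_mul]
    _ = 1 / 2 + (1 / 2) * ∫ y : EuclideanSpace ℝ (Fin n),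
          gaussKer n t (p.1 - y) * erf ((f y - p.2) / (2 * Real.sqrt t)) := by
        rw [hintK1]; ring
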